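/- Let d ≥ 2 and let B be a finite subset of a Cartesian product X₁ × ⋯ × X_d. For each i let B_i be the projection of B onto the product of coordinates omitting the i-th coordinate. Then |B|^{d−1} ≤ ∏_{i=1}^d |B_i| (the Loomis–Whitney / Han projection inequality). -/

import Mathlib

open Finset MeasureTheory
open scoped ENNReal

lemma holder_sum {ι κ : Type*} (s : Finset ι) (t : Finset κ) (f : ι → κ → ℝ≥0∞) (p : ι → ℝ)
    (hp : ∑ i ∈ s, p i = 1) (h2p : ∀ i ∈ s, 0 ≤ p i) :
    ∑ x ∈ t, ∏ i ∈ s, f i x ^ p i ≤ ∏ i ∈ s, (∑ x ∈ t, f i x) ^ p i := by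
  letI : MeasurableSpace {x // x ∈ t} := ⊤
  haveI : MeasurableSingletonClass {x // x ∈ t} := ⟨fun _ => trivial⟩
  have key := ENNReal.lintegral_prod_norm_pow_le (μ := (Measure.count : Measure {x // x ∈ t})) s
    (f := fun i a => f i a.1) (fun i _ => measurable_from_top.aemeasurable) hp h2p
  simp only [lintegral_count, tsum_fintype] at key
  calc ∑ x ∈ t, ∏ i ∈ s, f i x ^ p i
      = ∑ a : {x // x ∈ t}, ∏ i ∈ s, f i a.1 ^ p i := by
        rw [← Finset.sum_attach t (fun x => ∏ i ∈ s, f i x ^ p i), Finset.univ_eq_attach]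
    _ ≤ ∏ i ∈ s, (∑ a : {x // x ∈ t}, f i a.1) ^ p i := key
    _ = ∏ i ∈ s, (∑ x ∈ t, f i x) ^ p i := by
        refine Finset.prod_congr rfl fun i _ => ?_
        rw [Finset.univ_eq_attach, Finset.sum_attach t (fun x => f i x)]

def fcast {M : Type*} {X : M → Type*} {a b : M} (h : a = b) (u : X a) : X b := h ▸ u

lemma fcast_apply {M : Type*} {X : M → Type*} (f : ∀ i, X i) {a b : M} (h : a = b) :
    fcast (X := X) h (f a) = f b := by cases h; rfl

lemma fcast_inj {M : Type*} {X : M → Type*} {a b : M} (h : a = b) {u v : X a}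
    (huv : fcast (X := X) h u = fcast (X := X) h v) : u = v := by cases h; exact huv

def tr {m M : ℕ} {X : Fin M → Type*} {a b : Fin m → Fin M} (h : ∀ j, a j = b j)
    (g : ∀ j, X (a j)) (j : Fin m) : X (b j) := fcast (X := X) (h j) (g j)

lemma tr_injective {m M : ℕ} {X : Fin M → Type*} {a b : Fin m → Fin M} (h : ∀ j, a j = b j) :
    Function.Injective (tr (X := X) h) := fun _ _ e =>
  funext fun j => fcast_inj (h j) (congrFun e j)

lemma tr_comp {m M : ℕ} {X : Fin M → Type*} {a b : Fin m → Fin M} (h : ∀ j, a j = b j)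
    (f : ∀ i, X i) : tr (X := X) h (fun j => f (a j)) = fun j => f (b j) :=
  funext fun j => fcast_apply f (h j)

universe u

theorem proj_aux : ∀ (n : ℕ) (X : Fin (n + 2) → Type u) [∀ i, DecidableEq (X i)]
    (B : Finset (∀ i, X i)),
    B.card ^ (n + 1) ≤
      ∏ i : Fin (n + 2), (B.image fun f => fun j : Fin (n + 1) => f (i.succAbove j)).card
  | 0, X, _, B => by
    rw [pow_one, Fin.prod_univ_two, ← Finset.card_product]
    apply Finset.card_le_card_of_injOn
      (fun f => (fun j : Fin 1 => f ((0 : Fin 2).succAbove j),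
                 fun j : Fin 1 => f ((1 : Fin 2).succAbove j)))
    · intro f hf
      exact Finset.mem_product.2 ⟨Finset.mem_image_of_mem _ hf, Finset.mem_image_of_mem _ hf⟩
    · intro f hf f' hf' h
      have h0 := congrFun (congrArg Prod.fst h) 0
      have h1 := congrFun (congrArg Prod.snd h) 0
      funext i
      fin_cases i
      · exact h1
      · exact h0
  | (n+1), X, _inst, B => by
    classical
    set lst : Fin (n+3) := Fin.last (n+2) with hlstdef
    let Y : Fin (n+2) → Type u := fun i => X i.castSucc
    let res : (∀ i : Fin (n+3), X i) → ∀ i : Fin (n+2), Y i := fun f i => f i.castSucc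
    let T : Finset (X lst) := B.image fun f => f lst
    let Bx : X lst → Finset (∀ i, Y i) := fun x => (B.filter fun f => f lst = x).image res
    -- fact 1 : decomposition
    have hres_inj : ∀ x : X lst, Set.InjOn res (B.filter fun f => f lst = x) := by
      intro x f hf f' hf' e
      have hx := (Finset.mem_filter.1 hf).2
      have hx' := (Finset.mem_filter.1 hf').2
      funext i
      refine Fin.lastCases ?_ (fun j => ?_) i
      · rw [show Fin.last (n+2) = lst from rfl, hx, hx']
      · exact congrFun e j
    have hcard : B.card = ∑ x ∈ T, (Bx x).card := by
      rw [Finset.card_eq_sum_card_fiberwise (f := fun f => f lst) (t := T)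
        (fun f hf => Finset.mem_image_of_mem _ hf)]
      exact Finset.sum_congr rfl fun x _ => (Finset.card_image_of_injOn (hres_inj x)).symm
    -- fact 2 : slice injects into last projection
    have hlast : ∀ x : X lst, (Bx x).card ≤
        (B.image fun f => fun j : Fin (n+2) => f (lst.succAbove j)).card := by
      intro x
      have h : ∀ j : Fin (n+2), j.castSucc = lst.succAbove j :=
        fun j => (Fin.succAbove_last_apply j).symm
      apply Finset.card_le_card_of_injOn (tr (X := X) h)
      · intro g hg
        obtain ⟨f, hf, rfl⟩ := Finset.mem_image.1 hg
        have : tr (X := X) h (res f) = fun j => f (lst.succAbove j) := tr_comp h f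
        rw [this]
        exact Finset.mem_image_of_mem _ (Finset.mem_filter.1 hf).1
      · exact fun g _ g' _ e => tr_injective h e
    -- fact 3 : induction hypothesis
    have hIH : ∀ x : X lst, (Bx x).card ^ (n+1) ≤
        ∏ i : Fin (n+2), ((Bx x).image fun g => fun j : Fin (n+1) => g (i.succAbove j)).card :=
      fun x => proj_aux n Y (Bx x)
    -- fact 4 : slices of projections
    have hproj : ∀ i : Fin (n+2),
        (∑ x ∈ T, ((Bx x).image fun g => fun j : Fin (n+1) => g (i.succAbove j)).card)
          ≤ (B.image fun f => fun j : Fin (n+2) => f (i.castSucc.succAbove j)).card := by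
      intro i
      have h1 : ∀ j : Fin (n+1), (i.succAbove j).castSucc = i.castSucc.succAbove j.castSucc :=
        fun j => (Fin.castSucc_succAbove_castSucc).symm
      have h2 : lst = i.castSucc.succAbove (Fin.last (n+1)) :=
        (Fin.succAbove_ne_last_last (Fin.ne_of_lt (Fin.castSucc_lt_last i))).symm
      set Φ : X lst → (∀ j : Fin (n+1), X ((i.succAbove j).castSucc)) →
          (∀ j : Fin (n+2), X (i.castSucc.succAbove j)) :=
        fun x g => Fin.snoc (tr (X := X) h1 g) (fcast (X := X) h2 x) with hΦ
      have hΦinj : ∀ x, Function.Injective (Φ x) := by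
        intro x g g' e
        apply tr_injective h1
        funext j
        simpa only [hΦ, Fin.snoc_castSucc] using congrFun e j.castSucc
      have hΦmem : ∀ x : X lst, ∀ g ∈ (Bx x).image fun g => fun j : Fin (n+1) => g (i.succAbove j),
          Φ x g ∈ B.image fun f => fun j : Fin (n+2) => f (i.castSucc.succAbove j) := by
        intro x g hg
        obtain ⟨g', hg', rfl⟩ := Finset.mem_image.1 hg
        obtain ⟨f, hf, rfl⟩ := Finset.mem_image.1 hg'
        have hfB := (Finset.mem_filter.1 hf).1
        have hfx : f lst = x := (Finset.mem_filter.1 hf).2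
        have key : Φ x (fun j => res f (i.succAbove j)) =
            fun j => f (i.castSucc.succAbove j) := by
          funext j
          refine Fin.lastCases ?_ (fun j' => ?_) j
          · show Fin.snoc _ _ (Fin.last (n+1)) = _
            rw [Fin.snoc_last, ← hfx]
            exact fcast_apply f h2
          · show Fin.snoc _ _ j'.castSucc = _
            rw [Fin.snoc_castSucc]
            exact fcast_apply f (h1 j')
        rw [key]
        exact Finset.mem_image_of_mem _ hfB
      calc (∑ x ∈ T, ((Bx x).image fun g => fun j : Fin (n+1) => g (i.succAbove j)).card)
          = ∑ x ∈ T,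
              (((Bx x).image fun g => fun j : Fin (n+1) => g (i.succAbove j)).image (Φ x)).card :=
            Finset.sum_congr rfl fun x _ =>
              (Finset.card_image_of_injective _ (hΦinj x)).symm
        _ = (T.biUnion fun x =>
              ((Bx x).image fun g => fun j : Fin (n+1) => g (i.succAbove j)).image (Φ x)).card := by
            rw [Finset.card_biUnion]
            intro x _ x' _ hxx'
            rw [Function.onFun, Finset.disjoint_left]
            intro a ha ha'
            obtain ⟨g, _, rfl⟩ := Finset.mem_image.1 ha
            obtain ⟨g', _, e⟩ := Finset.mem_image.1 ha'
            apply hxx'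
            have h3 := congrFun e (Fin.last (n+1))
            simp only [hΦ, Fin.snoc_last] at h3
            exact (fcast_inj h2 h3).symm
        _ ≤ (B.image fun f => fun j : Fin (n+2) => f (i.castSucc.succAbove j)).card := by
            apply Finset.card_le_card
            rw [Finset.biUnion_subset]
            intro x hx
            intro a ha
            obtain ⟨g, hg, rfl⟩ := Finset.mem_image.1 ha
            exact hΦmem x g hg
    -- combine
    set L : ℕ := (B.image fun f => fun j : Fin (n+2) => f (lst.succAbove j)).card with hL
    set a : Fin (n+2) → ℕ :=
      fun i => (B.image fun f => fun j : Fin (n+2) => f (i.castSucc.succAbove j)).card with ha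
    set t : Fin (n+2) → X lst → ℕ :=
      fun i x => ((Bx x).image fun g => fun j : Fin (n+1) => g (i.succAbove j)).card with ht
    have hkey : ∀ x : X lst, (Bx x).card ^ (n+2) ≤ L * ∏ i : Fin (n+2), t i x := by
      intro x
      calc (Bx x).card ^ (n+2) = (Bx x).card * (Bx x).card ^ (n+1) := by ring
        _ ≤ L * ∏ i : Fin (n+2), t i x := Nat.mul_le_mul (hlast x) (hIH x)
    have goal' : B.card ^ (n+2) ≤ (∏ i : Fin (n+2), a i) * L := by
      set m : ℝ := (n : ℝ) + 2 with hm
      have hmpos : (0:ℝ) < m := by positivity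
      have hm0 : m ≠ 0 := ne_of_gt hmpos
      have hmn : ((n + 2 : ℕ) : ℝ) = m := by push_cast [hm]; ring
      have hp0 : (0:ℝ) ≤ 1/m := by positivity
      have main : (B.card : ℝ≥0∞) ≤
          (L : ℝ≥0∞) ^ (1/m) * ∏ i : Fin (n+2), ((a i : ℝ≥0∞)) ^ (1/m) := by
        calc (B.card : ℝ≥0∞) = ∑ x ∈ T, ((Bx x).card : ℝ≥0∞) := by
              rw [hcard]; push_cast; ring
          _ ≤ ∑ x ∈ T, ((L : ℝ≥0∞) * ∏ i : Fin (n+2), (t i x : ℝ≥0∞)) ^ (1/m) := by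
              refine Finset.sum_le_sum fun x _ => ?_
              have hc : ((Bx x).card : ℝ≥0∞) ^ m ≤
                  (L:ℝ≥0∞) * ∏ i : Fin (n+2), (t i x : ℝ≥0∞) := by
                rw [← hmn, ENNReal.rpow_natCast]
                exact_mod_cast hkey x
              have h4 := ENNReal.rpow_le_rpow hc hp0
              rwa [← ENNReal.rpow_mul, mul_one_div, div_self hm0, ENNReal.rpow_one] at h4
          _ = (L:ℝ≥0∞)^(1/m) * ∑ x ∈ T, ∏ i : Fin (n+2), ((t i x : ℝ≥0∞))^(1/m) := by
              rw [Finset.mul_sum]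
              refine Finset.sum_congr rfl fun x _ => ?_
              rw [ENNReal.mul_rpow_of_nonneg _ _ hp0, ← ENNReal.prod_rpow_of_nonneg hp0]
          _ ≤ (L:ℝ≥0∞)^(1/m) * ∏ i : Fin (n+2), (∑ x ∈ T, (t i x:ℝ≥0∞))^(1/m) := by
              refine mul_le_mul_right ?_ _
              refine holder_sum univ T _ _ ?_ (fun _ _ => hp0)
              rw [Finset.sum_const, Finset.card_univ, Fintype.card_fin, nsmul_eq_mul, hmn,
                mul_one_div, div_self hm0]
          _ ≤ (L:ℝ≥0∞)^(1/m) * ∏ i : Fin (n+2), ((a i:ℝ≥0∞))^(1/m) := by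
              refine mul_le_mul_right (Finset.prod_le_prod' fun i _ => ?_) _
              refine ENNReal.rpow_le_rpow ?_ hp0
              exact_mod_cast hproj i
      have main2 := ENNReal.rpow_le_rpow main (le_of_lt hmpos)
      rw [ENNReal.mul_rpow_of_nonneg _ _ (le_of_lt hmpos),
        ← ENNReal.rpow_mul, one_div_mul_cancel hm0, ENNReal.rpow_one,
        ← ENNReal.prod_rpow_of_nonneg (le_of_lt hmpos)] at main2
      have main3 : (B.card : ℝ≥0∞) ^ ((n+2 : ℕ) : ℝ) ≤
          (L:ℝ≥0∞) * ∏ i : Fin (n+2), (a i : ℝ≥0∞) := by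
        rw [hmn]
        refine le_trans main2 ?_
        refine mul_le_mul_right (Finset.prod_le_prod' fun i _ => ?_) _
        rw [← ENNReal.rpow_mul, one_div_mul_cancel hm0, ENNReal.rpow_one]
      rw [ENNReal.rpow_natCast] at main3
      have : ((B.card ^ (n+2) : ℕ) : ℝ≥0∞) ≤ (((∏ i : Fin (n+2), a i) * L : ℕ) : ℝ≥0∞) := by
        push_cast
        rw [mul_comm]
        exact_mod_cast main3
      exact_mod_cast this
    have hsplit : (∏ i : Fin (n+3),
        (B.image fun f => fun j : Fin (n+2) => f (i.succAbove j)).card)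
        = (∏ i : Fin (n+2), a i) * L :=
      Fin.prod_univ_castSucc fun i : Fin (n+3) =>
        (B.image fun f => fun j : Fin (n+2) => f (i.succAbove j)).card
    calc B.card ^ (n + 1 + 1) = B.card ^ (n + 2) := by ring
      _ ≤ (∏ i : Fin (n+2), a i) * L := goal'
      _ = ∏ i : Fin (n + 3),
          (B.image fun f => fun j : Fin (n + 2) => f (i.succAbove j)).card := hsplit.symm

theorem projection_inequality (n : ℕ) (X : Fin (n + 2) → Type*)
    [∀ i, DecidableEq (X i)] (B : Finset (∀ i, X i)) :
    B.card ^ (n + 1) ≤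
      ∏ i : Fin (n + 2),
        (B.image fun f => fun j : Fin (n + 1) => f (i.succAbove j)).card := by
  exact proj_aux n X B
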